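/- Let z₁,…,zₙ ∈ ℤ² with zⱼ = (kⱼ, ℓⱼ), let m₁,…,mₙ ∈ ℤ, and let μ_F be Haar measure on X_F. Then ∫_{X_F} ∏ⱼ w(zⱼ)^{mⱼ} dμ_F(w) = 1 if ∑_{j=1}^n mⱼ·2^{kⱼ}·3^{ℓⱼ} = 0 (as a rational number), and = 0 otherwise. -/

import Mathlib

open MeasureTheory

noncomputable instance : MeasurableSpace Circle := borel Circle
instance : BorelSpace Circle := ⟨rfl⟩

def XF : Set ((ℤ × ℤ) → Circle) :=
  {w | ∀ z : ℤ × ℤ, w (z + (1, 0)) = w z ^ 2 ∧ w (z + (0, 1)) = w z ^ 3}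

namespace XFaux

lemma coe_pow (x : Circle) (p : ℕ) : ((x ^ p : Circle) : ℂ) = (x : ℂ) ^ p := by
  induction p with
  | zero => simp
  | succ p ih => rw [pow_succ, pow_succ, Circle.coe_mul, ih]

lemma coe_zpow (x : Circle) (m : ℤ) : ((x ^ m : Circle) : ℂ) = (x : ℂ) ^ m := by
  cases m with
  | ofNat p => simpa using coe_pow x p
  | negSucc p => simp [zpow_negSucc, Circle.coe_inv, coe_pow]

lemma exp_mem (t : ℝ) : (fun z : ℤ × ℤ => Circle.exp (t * 2 ^ z.1 * 3 ^ z.2)) ∈ XF := by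
  intro z
  constructor
  · simp only [Prod.fst_add, Prod.snd_add, add_zero]
    have h : t * 2 ^ (z.1 + 1) * 3 ^ z.2 =
        t * 2 ^ z.1 * 3 ^ z.2 + t * 2 ^ z.1 * 3 ^ z.2 := by
      rw [zpow_add_one₀ (two_ne_zero (α := ℝ))]; ring
    rw [h, Circle.exp_add, sq]
  · simp only [Prod.fst_add, Prod.snd_add, add_zero]
    have h : t * 2 ^ z.1 * 3 ^ (z.2 + 1) =
        t * 2 ^ z.1 * 3 ^ z.2 + (t * 2 ^ z.1 * 3 ^ z.2 + t * 2 ^ z.1 * 3 ^ z.2) := by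
      rw [zpow_add_one₀ (three_ne_zero (α := ℝ))]; ring
    rw [h, Circle.exp_add, Circle.exp_add, pow_succ, sq]; exact (mul_assoc _ _ _).symm

lemma apply_right {w : (ℤ × ℤ) → Circle} (hw : w ∈ XF) (a b : ℤ) (p : ℕ) :
    w (a + p, b) = w (a, b) ^ (2 ^ p) := by
  induction p with
  | zero => simp
  | succ p ih =>
    have h := (hw ((a + (p : ℤ)), b)).1
    have he : ((a + (p : ℤ)), b) + (1, 0) = (a + ((p + 1 : ℕ) : ℤ), b) := by
      simp [Prod.ext_iff]; ring
    rw [he] at h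
    rw [h, ih, ← pow_mul, ← pow_succ]

lemma apply_top {w : (ℤ × ℤ) → Circle} (hw : w ∈ XF) (a b : ℤ) (q : ℕ) :
    w (a, b + q) = w (a, b) ^ (3 ^ q) := by
  induction q with
  | zero => simp
  | succ q ih =>
    have h := (hw (a, b + (q : ℤ))).2
    have he : (a, b + (q : ℤ)) + (0, 1) = (a, b + ((q + 1 : ℕ) : ℤ)) := by
      simp [Prod.ext_iff]; ring
    rw [he] at h
    rw [h, ih, ← pow_mul, ← pow_succ]

lemma apply_eq {w : (ℤ × ℤ) → Circle} (hw : w ∈ XF) (a b : ℤ) (p q : ℕ) :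
    w (a + p, b + q) = w (a, b) ^ (2 ^ p * 3 ^ q) := by
  rw [apply_right hw a (b + q) p, apply_top hw a b q, ← pow_mul, mul_comm (3 ^ q)]

lemma zpow_sum {ι : Type*} (x : Circle) (s : Finset ι) (f : ι → ℤ) :
    x ^ (∑ i ∈ s, f i) = ∏ i ∈ s, x ^ f i := by
  classical
  induction s using Finset.induction with
  | empty => simp
  | @insert _ _ h ih => rw [Finset.sum_insert h, Finset.prod_insert h, zpow_add, ih]

end XFaux

namespace XFaux

lemma measurableSet_XF : MeasurableSet XF := by
  have h : XF = ⋂ z : ℤ × ℤ,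
      ({w : (ℤ × ℤ) → Circle | w (z + (1, 0)) = w z ^ 2} ∩
       {w : (ℤ × ℤ) → Circle | w (z + (0, 1)) = w z ^ 3}) := by
    ext w
    simp only [XF, Set.mem_setOf_eq, Set.mem_iInter, Set.mem_inter_iff]
  rw [h]
  refine MeasurableSet.iInter fun z => MeasurableSet.inter ?_ ?_
  · exact (measurable_pi_apply _).stronglyMeasurable.measurableSet_eq_fun
      (((continuous_pow 2).measurable).comp (measurable_pi_apply z)).stronglyMeasurable
  · exact (measurable_pi_apply _).stronglyMeasurable.measurableSet_eq_fun
      (((continuous_pow 3).measurable).comp (measurable_pi_apply z)).stronglyMeasurable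

lemma coe_prod {ι : Type*} (s : Finset ι) (f : ι → Circle) :
    ((∏ i ∈ s, f i : Circle) : ℂ) = ∏ i ∈ s, (f i : ℂ) := by
  classical
  induction s using Finset.induction with
  | empty => simp
  | @insert _ _ h ih => rw [Finset.prod_insert h, Finset.prod_insert h, Circle.coe_mul, ih]

lemma prod_eq {w : (ℤ × ℤ) → Circle} (hw : w ∈ XF) {n : ℕ}
    (k l m : Fin n → ℤ) (k₀ l₀ : ℤ) (hk : ∀ j, k₀ ≤ k j) (hl : ∀ j, l₀ ≤ l j) :
    ∏ j, (w (k j, l j) : ℂ) ^ (m j) =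
      (w (k₀, l₀) : ℂ) ^ (∑ j, m j * 2 ^ (k j - k₀).toNat * 3 ^ (l j - l₀).toNat) := by
  have key : ∀ j, (w (k j, l j)) ^ (m j) =
      w (k₀, l₀) ^ (m j * 2 ^ (k j - k₀).toNat * 3 ^ (l j - l₀).toNat) := by
    intro j
    have h1 : (k j, l j) = ((k₀ + ((k j - k₀).toNat : ℤ)), (l₀ + ((l j - l₀).toNat : ℤ))) := by
      rw [Int.toNat_of_nonneg (sub_nonneg.2 (hk j)), Int.toNat_of_nonneg (sub_nonneg.2 (hl j))]
      simp
    rw [h1, apply_eq hw, ← zpow_natCast (w (k₀, l₀)) (2 ^ _ * 3 ^ _), ← zpow_mul]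
    congr 1
    push_cast
    ring
  calc ∏ j, (w (k j, l j) : ℂ) ^ (m j)
      = ∏ j, ((w (k j, l j) ^ (m j) : Circle) : ℂ) := by simp only [coe_zpow]
    _ = ((∏ j, w (k j, l j) ^ (m j) : Circle) : ℂ) := (coe_prod _ _).symm
    _ = ((w (k₀, l₀) ^ (∑ j, m j * 2 ^ (k j - k₀).toNat * 3 ^ (l j - l₀).toNat) : Circle) : ℂ) := by
        rw [zpow_sum]
        exact congrArg _ (Finset.prod_congr rfl fun j _ => key j)
    _ = _ := coe_zpow _ _

end XFaux

theorem xf_generalized_correlations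
    (μF : Measure ((ℤ × ℤ) → Circle)) [IsProbabilityMeasure μF]
    (hsupp : μF XF = 1)
    (hinv : ∀ v ∈ XF, Measure.map (fun w => v * w) μF = μF)
    {n : ℕ} (k l m : Fin n → ℤ) :
    ∫ w, (∏ j, ((w (k j, l j) : ℂ) ^ (m j))) ∂μF =
      if (∑ j, (m j : ℚ) * 2 ^ (k j) * 3 ^ (l j)) = 0 then 1 else 0 := by
  classical
  have hmeasχ : Measurable fun w : (ℤ × ℤ) → Circle => ∏ j, ((w (k j, l j) : ℂ) ^ (m j)) := by
    apply Finset.measurable_prod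
    intro j _
    have h1 : Measurable fun w : (ℤ × ℤ) → Circle => (w (k j, l j)) ^ (m j) :=
      ((continuous_zpow (m j)).measurable).comp (measurable_pi_apply _)
    have hc : Continuous (fun x : Circle => (x : ℂ)) := continuous_induced_dom
    have h2 : Measurable (fun x : Circle => (x : ℂ)) := hc.measurable
    have := h2.comp h1
    simpa only [Function.comp_def, XFaux.coe_zpow] using this
  have haeXF : ∀ᵐ w ∂μF, w ∈ XF := by
    rw [Filter.eventually_iff, MeasureTheory.mem_ae_iff]
    have hc : μF XFᶜ = 0 := by
      rw [measure_compl XFaux.measurableSet_XF (measure_ne_top μF XF), measure_univ, hsupp,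
        tsub_self]
    exact hc
  by_cases hS : (∑ j, (m j : ℚ) * 2 ^ (k j) * 3 ^ (l j)) = 0
  · rw [if_pos hS]
    rcases Nat.eq_zero_or_pos n with hn | hn
    · subst hn
      simp
    haveI : Nonempty (Fin n) := ⟨⟨0, hn⟩⟩
    set k₀ := Finset.univ.inf' Finset.univ_nonempty k with hk₀
    set l₀ := Finset.univ.inf' Finset.univ_nonempty l with hl₀
    have hk : ∀ j, k₀ ≤ k j := fun j => Finset.inf'_le _ (Finset.mem_univ j)
    have hl : ∀ j, l₀ ≤ l j := fun j => Finset.inf'_le _ (Finset.mem_univ j)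
    set M : ℤ := ∑ j, m j * 2 ^ (k j - k₀).toNat * 3 ^ (l j - l₀).toNat with hM
    have hM0 : M = 0 := by
      have hcast : (M : ℚ) * 2 ^ k₀ * 3 ^ l₀ = ∑ j, (m j : ℚ) * 2 ^ (k j) * 3 ^ (l j) := by
        rw [hM]
        push_cast
        rw [Finset.sum_mul, Finset.sum_mul]
        refine Finset.sum_congr rfl fun j _ => ?_
        have e2 : ((2 : ℚ) ^ ((k j - k₀).toNat)) * 2 ^ k₀ = 2 ^ (k j) := by
          rw [← zpow_natCast (2 : ℚ), ← zpow_add₀ (two_ne_zero),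
            Int.toNat_of_nonneg (sub_nonneg.2 (hk j)), sub_add_cancel]
        have e3 : ((3 : ℚ) ^ ((l j - l₀).toNat)) * 3 ^ l₀ = 3 ^ (l j) := by
          rw [← zpow_natCast (3 : ℚ), ← zpow_add₀ (three_ne_zero),
            Int.toNat_of_nonneg (sub_nonneg.2 (hl j)), sub_add_cancel]
        calc (m j : ℚ) * 2 ^ ((k j - k₀).toNat) * 3 ^ ((l j - l₀).toNat) * 2 ^ k₀ * 3 ^ l₀
            = (m j : ℚ) * ((2 ^ ((k j - k₀).toNat)) * 2 ^ k₀) *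
              ((3 ^ ((l j - l₀).toNat)) * 3 ^ l₀) := by ring
          _ = _ := by rw [e2, e3]
      rw [hS] at hcast
      have h2 : ((2 : ℚ) ^ k₀) ≠ 0 := zpow_ne_zero _ two_ne_zero
      have h3 : ((3 : ℚ) ^ l₀) ≠ 0 := zpow_ne_zero _ three_ne_zero
      have hMQ : (M : ℚ) = 0 := by
        by_contra hne
        exact (mul_ne_zero (mul_ne_zero hne h2) h3) hcast
      exact_mod_cast hMQ
    have hone : ∀ᵐ w ∂μF, (∏ j, ((w (k j, l j) : ℂ) ^ (m j))) = 1 := by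
      filter_upwards [haeXF] with w hw
      rw [XFaux.prod_eq hw k l m k₀ l₀ hk hl, ← hM, hM0, zpow_zero]
    rw [integral_congr_ae hone, integral_const]
    simp
  · rw [if_neg hS]
    set SR : ℝ := ∑ j, (m j : ℝ) * 2 ^ (k j) * 3 ^ (l j) with hSR
    have hSR0 : SR ≠ 0 := by
      intro h0
      apply hS
      have hQ : ((∑ j, (m j : ℚ) * 2 ^ (k j) * 3 ^ (l j) : ℚ) : ℝ) = SR := by
        rw [hSR]; push_cast; ring
      rw [h0] at hQ
      exact_mod_cast hQ
    set t : ℝ := Real.pi / SR with ht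
    set v : (ℤ × ℤ) → Circle := fun z => Circle.exp (t * 2 ^ z.1 * 3 ^ z.2) with hv
    have hvXF : v ∈ XF := XFaux.exp_mem t
    have hχv : (∏ j, ((v (k j, l j) : ℂ) ^ (m j))) = -1 := by
      have hterm : ∀ j : Fin n, ((v (k j, l j) : ℂ) ^ (m j)) =
          Complex.exp ((((m j : ℝ) * (t * 2 ^ (k j) * 3 ^ (l j))) : ℝ) * Complex.I) := by
        intro j
        rw [hv]
        simp only [Circle.coe_exp]
        rw [← Complex.exp_int_mul]
        congr 1
        push_cast
        ring
      rw [Finset.prod_congr rfl fun j _ => hterm j, ← Complex.exp_sum]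
      have hsum : (∑ j, ((((m j : ℝ) * (t * 2 ^ (k j) * 3 ^ (l j))) : ℝ) * Complex.I : ℂ))
          = (Real.pi : ℂ) * Complex.I := by
        rw [← Finset.sum_mul]
        congr 1
        rw [← Complex.ofReal_sum]
        norm_cast
        have : ∑ j, (m j : ℝ) * (t * 2 ^ (k j) * 3 ^ (l j)) = t * SR := by
          rw [hSR, Finset.mul_sum]
          exact Finset.sum_congr rfl fun j _ => by ring
        rw [this, ht, div_mul_cancel₀ _ hSR0]
      rw [hsum, Complex.exp_pi_mul_I]
    have hmul : Measurable fun w : (ℤ × ℤ) → Circle => v * w := by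
      apply measurable_pi_lambda
      intro z
      have : Measurable fun w : (ℤ × ℤ) → Circle => v z * w z :=
        ((continuous_mul_left (v z)).measurable).comp (measurable_pi_apply z)
      exact this
    have h1 : ∫ w, (∏ j, ((w (k j, l j) : ℂ) ^ (m j))) ∂μF
        = ∫ w, (∏ j, (((v * w) (k j, l j) : ℂ) ^ (m j))) ∂μF := by
      conv_lhs => rw [← hinv v hvXF]
      rw [integral_map hmul.aemeasurable]
      rw [hinv v hvXF]
      exact hmeasχ.aestronglyMeasurable
    have h2 : ∀ w : (ℤ × ℤ) → Circle, (∏ j, (((v * w) (k j, l j) : ℂ) ^ (m j)))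
        = (∏ j, ((v (k j, l j) : ℂ) ^ (m j))) * (∏ j, ((w (k j, l j) : ℂ) ^ (m j))) := by
      intro w
      rw [← Finset.prod_mul_distrib]
      refine Finset.prod_congr rfl fun j _ => ?_
      rw [Pi.mul_apply, Circle.coe_mul, mul_zpow]
    simp only [h2, hχv, neg_one_mul] at h1
    rw [integral_neg] at h1
    have := add_self_eq_zero.mp (by linear_combination h1 :
      (∫ w, (∏ j, ((w (k j, l j) : ℂ) ^ (m j))) ∂μF) +
      (∫ w, (∏ j, ((w (k j, l j) : ℂ) ^ (m j))) ∂μF) = 0)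
    exact this
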